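/- Let n ≥ 1 and suppose f is a continuous probability density on ℝ that is strictly positive on its support, with all integrals below existing. Then the reverse Kullback–Leibler information between a perfect RSS and an SRS of size n is distribution-free: Σ_{i=1}^n K(f_(i), f) = Σ_{i=1}^n ∫_0^1 b_i(u)·log b_i(u) du = −Σ_{i=1}^n H(U_(i)), where b_i(u) = i·C(n,i)·u^{i-1}·(1-u)^{n-i} is the Beta(i, n-i+1) density. -/

import Mathlib

open MeasureTheory Real

/-- Cumulative distribution function of a density `f`. -/
noncomputable def cdfOf (f : ℝ → ℝ) (x : ℝ) : ℝ := ∫ t in Set.Iic x, f t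

/-- Density of the `i`-th order statistic from a sample of size `n` with parent density `f`. -/
noncomputable def osDen (f : ℝ → ℝ) (n i : ℕ) (x : ℝ) : ℝ :=
  (i : ℝ) * (n.choose i : ℝ) * (cdfOf f x) ^ (i - 1) * (1 - cdfOf f x) ^ (n - i) * f x

/-- Kullback–Leibler divergence between densities `g` and `h`. -/
noncomputable def KL (g h : ℝ → ℝ) : ℝ := ∫ x, g x * Real.log (g x / h x)

/-- Beta(i, n-i+1) density: `b_i(u) = i·C(n,i)·u^(i-1)·(1-u)^(n-i)`. -/
noncomputable def betaDen (n i : ℕ) (u : ℝ) : ℝ :=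
  (i : ℝ) * (n.choose i : ℝ) * u ^ (i - 1) * (1 - u) ^ (n - i)

/-- The reverse Kullback–Leibler information between a perfect RSS and an SRS of size `n` is
distribution-free: `Σ_{i=1}^n K(f_(i), f) = Σ_{i=1}^n ∫_0^1 b_i(u)·log b_i(u) du`
(which equals `−Σ_{i=1}^n H(U_(i))`). -/
theorem KL_RSS_SRS_distribution_free (n : ℕ) (hn : 1 ≤ n) (f : ℝ → ℝ)
    (hf_cont : Continuous f) (hf_nonneg : ∀ x, 0 ≤ f x)
    (hf_int : ∫ x, f x = 1)
    (hf_pos : ∀ x ∈ Function.support f, 0 < f x)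
    (hF_mono : StrictMonoOn (cdfOf f) (Function.support f))
    (hF_bij : Set.BijOn (cdfOf f) (Function.support f) (Set.Ioo 0 1))
    (hint : ∀ i ∈ Finset.Icc 1 n,
      Integrable (fun x => osDen f n i x * Real.log (osDen f n i x / f x)))
    (hbl : ∀ i ∈ Finset.Icc 1 n,
      IntegrableOn (fun u => betaDen n i u * Real.log (betaDen n i u)) (Set.Ioo 0 1)) :
    (∑ i ∈ Finset.Icc 1 n, KL (osDen f n i) f)
      = ∑ i ∈ Finset.Icc 1 n,
          ∫ u in Set.Ioo (0:ℝ) 1, betaDen n i u * Real.log (betaDen n i u) := by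
  have hf_integrable : Integrable f := by
    by_contra h
    rw [MeasureTheory.integral_undef h] at hf_int; norm_num at hf_int
  have hF_deriv : ∀ x, HasDerivAt (cdfOf f) (f x) x := by
    intro x
    have h1 : ∀ y, cdfOf f y = cdfOf f 0 + ∫ t in (0:ℝ)..y, f t := by
      intro y
      have := intervalIntegral.integral_Iic_sub_Iic (μ := volume) (f := f) (a := (0:ℝ)) (b := y)
        hf_integrable.integrableOn hf_integrable.integrableOn
      unfold cdfOf
      linarith [this]
    have h2 : HasDerivAt (fun y => cdfOf f 0 + ∫ t in (0:ℝ)..y, f t) (f x) x := by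
      apply HasDerivAt.const_add
      exact intervalIntegral.integral_hasDerivAt_right
        (hf_integrable.intervalIntegrable)
        (hf_cont.stronglyMeasurableAtFilter _ _) hf_cont.continuousAt
    exact h2.congr_of_eventuallyEq (Filter.Eventually.of_forall h1)
  have hsupp_open : IsOpen (Function.support f) := hf_cont.isOpen_support
  refine Finset.sum_congr rfl (fun i hi => ?_)
  set G : ℝ → ℝ := fun u => betaDen n i u * Real.log (betaDen n i u) with hG
  -- change of variables
  have hcov : ∫ u in Set.Ioo (0:ℝ) 1, G u
      = ∫ x in Function.support f, |f x| • G (cdfOf f x) := by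
    rw [← hF_bij.image_eq]
    exact MeasureTheory.integral_image_eq_integral_abs_deriv_smul hsupp_open.measurableSet
      (fun x _ => (hF_deriv x).hasDerivWithinAt) hF_bij.injOn G
  rw [hcov]
  -- KL integral equals integral over support
  have hKL : KL (osDen f n i) f
      = ∫ x in Function.support f, osDen f n i x * Real.log (osDen f n i x / f x) := by
    unfold KL
    refine (MeasureTheory.setIntegral_eq_integral_of_forall_compl_eq_zero (fun x hx => ?_)).symm
    have hfx : f x = 0 := Function.notMem_support.mp hx
    simp [osDen, hfx]
  rw [hKL]
  refine MeasureTheory.setIntegral_congr_fun hsupp_open.measurableSet (fun x hx => ?_)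
  have hfx : 0 < f x := hf_pos x hx
  have h1 : osDen f n i x = betaDen n i (cdfOf f x) * f x := by
    unfold osDen betaDen; ring
  have h2 : osDen f n i x / f x = betaDen n i (cdfOf f x) := by
    rw [h1, mul_div_assoc, div_self hfx.ne', mul_one]
  rw [h2, h1, abs_of_pos hfx, hG]
  simp only [smul_eq_mul]
  ring
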